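/- For every pair of integers n, j with n ≥ 3 and 1 ≤ j ≤ n−2, one has (e^{−2}/(4n³))·(n^{1−j/n}·κ(j/n))^n ≤ A6(n,j) ≤ 2·(n^{1−j/n}·κ(j/n))^n. -/

import Mathlib

noncomputable def mu6 (n j : ℕ) : ℝ :=
  ((n - j).choose 2 : ℝ) * ((n : ℝ) * ((n : ℝ) - 1) * (4 * (n : ℝ) - 5)) /
    (6 * (Nat.choose n 2 : ℝ) ^ 2)

noncomputable def d6 (n j : ℕ) : ℝ :=
  let N : ℝ := (Nat.choose n 2 : ℝ)
  let m : ℝ := ((n - j : ℕ) : ℝ)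
  let U : ℝ := (n : ℝ) * ((n : ℝ) - 1) * (4 * (n : ℝ) - 5) / (6 * N ^ 2)
  let V : ℝ := 4 * (m - 2) * ((n : ℝ) * ((n : ℝ) - 1) * (2 * (n : ℝ) - 1)) / (6 * N ^ 2)
  let W : ℝ := 3 * (m - 2) * (n : ℝ) * ((n : ℝ) - 1) / ((4 * (n : ℝ) - 5) * N)
  let Z : ℝ := 2 * (m - 2) * (2 * (n : ℝ) - 1) * ((n : ℝ) + 1) / ((4 * (n : ℝ) - 5) * N)
  U + 2 * (V + W + Z)

noncomputable def D6 (n j : ℕ) : ℝ :=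
  min (d6 n j) (min (2 * mu6 n j * d6 n j) 1)

noncomputable def kappa (x : ℝ) : ℝ := (Real.exp 1 / 2) ^ (1 - x) * (1 - x) ^ (-(1 - x))

noncomputable def A6 (n j : ℕ) : ℝ :=
  ((Nat.choose n 2 : ℝ) ^ (n - j) / ((n - j).factorial : ℝ)) *
    Real.exp (-(mu6 n j)) * (1 + Real.exp (mu6 n j) * D6 n j)


-- x^m/m! ≤ exp x
lemma aux_pow_div_fact_le_exp {x : ℝ} (hx : 0 ≤ x) (m : ℕ) :
    x ^ m / (m.factorial : ℝ) ≤ Real.exp x := by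
  calc x ^ m / (m.factorial : ℝ)
      ≤ ∑ i ∈ Finset.range (m+1), x ^ i / (i.factorial : ℝ) := by
        refine Finset.single_le_sum (f := fun i => x ^ i / (i.factorial : ℝ))
          (fun i _ => by positivity) (Finset.self_mem_range_succ m)
    _ ≤ Real.exp x := Real.sum_le_exp_of_nonneg hx _

-- e ≤ (1+1/m)^(m+1)
lemma aux_e_le (m : ℕ) (hm : 1 ≤ m) :
    Real.exp 1 * (m : ℝ) ^ (m+1) ≤ ((m : ℝ) + 1) ^ (m+1) := by
  have hm0 : (0:ℝ) < m := by exact_mod_cast hm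
  have h1 : Real.exp (1/((m:ℝ)+1)) ≤ ((m:ℝ)+1)/m := by
    have h2 := Real.add_one_le_exp (-(1/((m:ℝ)+1)))
    have h3 : (0:ℝ) < (m:ℝ)/((m:ℝ)+1) := by positivity
    have h4 : (m:ℝ)/((m:ℝ)+1) ≤ Real.exp (-(1/((m:ℝ)+1))) := by
      have : -(1/((m:ℝ)+1)) + 1 = (m:ℝ)/((m:ℝ)+1) := by field_simp; ring
      linarith [h2, this.symm.le]
    have h5 : Real.exp (1/((m:ℝ)+1)) = (Real.exp (-(1/((m:ℝ)+1))))⁻¹ := by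
      rw [← Real.exp_neg]; ring_nf
    rw [h5]
    rw [inv_le_comm₀ (Real.exp_pos _) (by positivity)]
    calc (((m:ℝ)+1)/m)⁻¹ = (m:ℝ)/((m:ℝ)+1) := by rw [inv_div]
      _ ≤ _ := h4
  have key : Real.exp 1 ≤ (((m:ℝ)+1)/m) ^ (m+1) := by
    have := pow_le_pow_left₀ (Real.exp_nonneg _) h1 (m+1)
    calc Real.exp 1 = Real.exp (1/((m:ℝ)+1)) ^ (m+1) := by
          rw [← Real.exp_nat_mul]
          congr 1
          push_cast
          field_simp
      _ ≤ (((m:ℝ)+1)/m) ^ (m+1) := this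
  calc Real.exp 1 * (m:ℝ)^(m+1) ≤ (((m:ℝ)+1)/m)^(m+1) * (m:ℝ)^(m+1) := by
        apply mul_le_mul_of_nonneg_right key (by positivity)
    _ = ((m:ℝ)+1)^(m+1) := by
        rw [← mul_pow]
        congr 1
        field_simp

-- m! * e^m ≤ e * m^(m+1)  for m ≥ 1
lemma aux_fact_upper (m : ℕ) (hm : 1 ≤ m) :
    (m.factorial : ℝ) * Real.exp 1 ^ m ≤ Real.exp 1 * (m : ℝ) ^ (m+1) := by
  induction m with
  | zero => omega
  | succ k ih =>
    rcases Nat.eq_or_lt_of_le hm with h | h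
    · have hk0 : k = 0 := by omega
      subst hk0
      norm_num [Nat.factorial]
    · have hk : 1 ≤ k := by omega
      have ihk := ih hk
      have hk0 : (0:ℝ) < k := by exact_mod_cast hk
      have step := aux_e_le k hk
      have e0 : (0:ℝ) < Real.exp 1 := Real.exp_pos 1
      calc ((k+1).factorial : ℝ) * Real.exp 1 ^ (k+1)
          = ((k:ℝ)+1) * Real.exp 1 * ((k.factorial : ℝ) * Real.exp 1 ^ k) := by
            rw [Nat.factorial_succ]
            push_cast
            ring
        _ ≤ ((k:ℝ)+1) * Real.exp 1 * (Real.exp 1 * (k:ℝ)^(k+1)) := by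
            apply mul_le_mul_of_nonneg_left ihk (by positivity)
        _ = ((k:ℝ)+1) * (Real.exp 1 * (Real.exp 1 * (k:ℝ)^(k+1))) := by ring
        _ ≤ ((k:ℝ)+1) * (Real.exp 1 * ((k:ℝ)+1)^(k+1)) := by
            apply mul_le_mul_of_nonneg_left _ (by positivity)
            apply mul_le_mul_of_nonneg_left step e0.le
        _ = Real.exp 1 * ((k:ℝ)+1)^(k+2) := by ring
        _ = Real.exp 1 * (((k+1:ℕ)):ℝ)^(k+1+1) := by push_cast; ring


lemma aux_ratio (n m : ℕ) (hn : 2 ≤ n) (hm : m ≤ n - 1) :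
    (n:ℝ)^m ≤ Real.exp 1 * ((n:ℝ)-1)^m := by
  have hn1 : (0:ℝ) < (n:ℝ) - 1 := by
    have : (2:ℝ) ≤ n := by exact_mod_cast hn
    linarith
  have hmR : (m:ℝ) ≤ (n:ℝ) - 1 := by
    have : (m:ℝ) ≤ ((n-1:ℕ):ℝ) := by exact_mod_cast hm
    rwa [Nat.cast_sub (by omega), Nat.cast_one] at this
  have h1 : (n:ℝ) ≤ ((n:ℝ)-1) * Real.exp (1/((n:ℝ)-1)) := by
    have h2 := Real.add_one_le_exp (1/((n:ℝ)-1))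
    have := mul_le_mul_of_nonneg_left h2 hn1.le
    calc (n:ℝ) = ((n:ℝ)-1) * (1/((n:ℝ)-1) + 1) := by field_simp; ring
      _ ≤ ((n:ℝ)-1) * Real.exp (1/((n:ℝ)-1)) := this
  calc (n:ℝ)^m ≤ (((n:ℝ)-1) * Real.exp (1/((n:ℝ)-1)))^m := by
        exact pow_le_pow_left₀ (by positivity) h1 m
    _ = ((n:ℝ)-1)^m * Real.exp ((m:ℝ) * (1/((n:ℝ)-1))) := by
        rw [mul_pow, Real.exp_nat_mul]
    _ ≤ ((n:ℝ)-1)^m * Real.exp 1 := by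
        apply mul_le_mul_of_nonneg_left _ (by positivity)
        apply Real.exp_le_exp.mpr
        rw [mul_one_div, div_le_one hn1]
        exact hmR
    _ = Real.exp 1 * ((n:ℝ)-1)^m := by ring



lemma aux_target (n j : ℕ) (hn : 3 ≤ n) (hj1 : 1 ≤ j) (hj2 : j ≤ n - 2) :
    ((n : ℝ) ^ (1 - (j : ℝ) / n) * kappa ((j : ℝ) / n)) ^ n
      = ((n:ℝ)^2 * Real.exp 1 / (2 * ((n - j : ℕ) : ℝ))) ^ (n - j) := by
  have hjn : j ≤ n := by omega
  have hn0 : (0:ℝ) < n := by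
    have : (3:ℝ) ≤ n := by exact_mod_cast hn
    linarith
  have hm0 : (0:ℝ) < ((n - j : ℕ) : ℝ) := by exact_mod_cast Nat.pos_of_ne_zero (by omega)
  set mR : ℝ := ((n - j : ℕ) : ℝ) with hmR
  have hcast : mR = (n:ℝ) - j := by rw [hmR, Nat.cast_sub hjn]
  set c : ℝ := mR / n with hc
  have hc0 : 0 < c := by positivity
  have hx : 1 - (j:ℝ)/n = c := by rw [hc, hcast]; field_simp
  have hbase : (n : ℝ) ^ (1 - (j : ℝ) / n) * kappa ((j : ℝ) / n)
      = ((n:ℝ)^2 * Real.exp 1 / (2 * mR)) ^ c := by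
    rw [kappa, hx]
    rw [Real.rpow_neg hc0.le, ← Real.inv_rpow hc0.le]
    rw [← Real.mul_rpow (by positivity) (by positivity)]
    rw [← Real.mul_rpow (by positivity) (by positivity)]
    congr 1
    rw [hc]
    field_simp
  rw [hbase, ← Real.rpow_natCast (((n:ℝ)^2 * Real.exp 1 / (2 * mR)) ^ c) n,
    ← Real.rpow_mul (by positivity)]
  have hcn : c * (n:ℕ) = mR := by rw [hc]; field_simp
  rw [hcn, hmR, Real.rpow_natCast]

lemma aux_main_upper (n m : ℕ) (hn : 3 ≤ n) (hm : 2 ≤ m) (hmn : m ≤ n - 1) :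
    ((n.choose 2 : ℝ))^m / (m.factorial : ℝ) ≤ ((n:ℝ)^2 * Real.exp 1 / (2*(m:ℝ)))^m := by
  have hn0 : (3:ℝ) ≤ n := by exact_mod_cast hn
  have hm0 : (0:ℝ) < m := by exact_mod_cast (by omega : 0 < m)
  have hfac : (0:ℝ) < (m.factorial : ℝ) := by exact_mod_cast m.factorial_pos
  have e0 : (0:ℝ) < Real.exp 1 := Real.exp_pos 1
  have h2 : (m:ℝ)^m ≤ Real.exp 1 ^ m * (m.factorial : ℝ) := by
    have := aux_pow_div_fact_le_exp (x := (m:ℝ)) (by positivity) m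
    have hexp : Real.exp ((m:ℝ)) = Real.exp 1 ^ m := by
      rw [← Real.exp_nat_mul]; norm_num
    rw [div_le_iff₀ hfac, hexp] at this
    linarith
  rw [Nat.cast_choose_two, div_le_iff₀ hfac]
  calc ((n:ℝ) * ((n:ℝ)-1) / 2)^m ≤ ((n:ℝ)^2/2)^m := by
        apply pow_le_pow_left₀ (by nlinarith) (by nlinarith)
    _ = ((n:ℝ)^2 * Real.exp 1/(2*(m:ℝ)))^m * ((m:ℝ)^m / Real.exp 1^m) := by
        have hid : (n:ℝ)^2/2 = ((n:ℝ)^2*Real.exp 1/(2*(m:ℝ))) * ((m:ℝ)/Real.exp 1) := by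
          field_simp
        rw [hid, mul_pow, div_pow]
        rw [div_pow]
    _ ≤ ((n:ℝ)^2 * Real.exp 1/(2*(m:ℝ)))^m * (m.factorial : ℝ) := by
        apply mul_le_mul_of_nonneg_left _ (by positivity)
        rw [div_le_iff₀ (by positivity)]
        linarith [h2]

lemma aux_main_lower (n m : ℕ) (hn : 3 ≤ n) (hm : 2 ≤ m) (hmn : m ≤ n - 1) :
    ((n:ℝ)^2 * Real.exp 1 / (2*(m:ℝ)))^m
      ≤ Real.exp 1 ^ 2 * (n:ℝ) * (((n.choose 2 : ℝ))^m / (m.factorial : ℝ)) := by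
  have hn0 : (3:ℝ) ≤ n := by exact_mod_cast hn
  have hm0 : (0:ℝ) < m := by exact_mod_cast (by omega : 0 < m)
  have hmlen : (m:ℝ) ≤ n := by
    have : m ≤ n := by omega
    exact_mod_cast this
  have hfac : (0:ℝ) < (m.factorial : ℝ) := by exact_mod_cast m.factorial_pos
  have e0 : (0:ℝ) < Real.exp 1 := Real.exp_pos 1
  have hratio := aux_ratio n m (by omega) hmn
  have hfu := aux_fact_upper m (by omega)
  rw [Nat.cast_choose_two]
  rw [show Real.exp 1 ^ 2 * (n:ℝ) * (((n:ℝ)*((n:ℝ)-1)/2)^m / (m.factorial : ℝ))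
      = (Real.exp 1 ^ 2 * (n:ℝ) * ((n:ℝ)*((n:ℝ)-1)/2)^m) / (m.factorial : ℝ) from by ring]
  rw [le_div_iff₀ hfac]
  calc ((n:ℝ)^2 * Real.exp 1/(2*(m:ℝ)))^m * (m.factorial : ℝ)
      = ((n:ℝ)^2/(2*(m:ℝ)))^m * ((m.factorial : ℝ) * Real.exp 1 ^ m) := by
        rw [show (n:ℝ)^2 * Real.exp 1/(2*(m:ℝ)) = ((n:ℝ)^2/(2*(m:ℝ))) * Real.exp 1 from by ring,
          mul_pow]
        ring
    _ ≤ ((n:ℝ)^2/(2*(m:ℝ)))^m * (Real.exp 1 * (m:ℝ)^(m+1)) := by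
        apply mul_le_mul_of_nonneg_left hfu (by positivity)
    _ = Real.exp 1 * (m:ℝ) * (((n:ℝ)^2/(2*(m:ℝ)))^m * (m:ℝ)^m) := by
        rw [pow_succ]
        ring
    _ = Real.exp 1 * (m:ℝ) * ((n:ℝ)^m * ((n:ℝ)/2)^m) := by
        congr 1
        rw [← mul_pow, ← mul_pow]
        congr 1
        field_simp
    _ ≤ Real.exp 1 * (m:ℝ) * ((Real.exp 1 * ((n:ℝ)-1)^m) * ((n:ℝ)/2)^m) := by
        apply mul_le_mul_of_nonneg_left _ (by positivity)
        apply mul_le_mul_of_nonneg_right hratio (by positivity)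
    _ = Real.exp 1 ^ 2 * (m:ℝ) * (((n:ℝ)-1) * ((n:ℝ)/2))^m := by
        rw [mul_pow]
        ring
    _ ≤ Real.exp 1 ^ 2 * (n:ℝ) * (((n:ℝ)-1) * ((n:ℝ)/2))^m := by
        apply mul_le_mul_of_nonneg_right _ (pow_nonneg (by nlinarith) m)
        apply mul_le_mul_of_nonneg_left hmlen (by positivity)
    _ = Real.exp 1 ^ 2 * (n:ℝ) * ((n:ℝ) * ((n:ℝ)-1)/2)^m := by
        congr 2
        ring

set_option maxHeartbeats 1600000 in
theorem stmt_15 (n j : ℕ) (hn : 3 ≤ n) (hj1 : 1 ≤ j) (hj2 : j ≤ n - 2) :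
    Real.exp (-2) / (4 * (n : ℝ) ^ 3) *
        ((n : ℝ) ^ (1 - (j : ℝ) / n) * kappa ((j : ℝ) / n)) ^ n ≤ A6 n j ∧
    A6 n j ≤ 2 * ((n : ℝ) ^ (1 - (j : ℝ) / n) * kappa ((j : ℝ) / n)) ^ n := by
  -- basic numeric facts
  have hjn : j ≤ n := by omega
  have hm2 : 2 ≤ n - j := by omega
  have hmn1 : n - j ≤ n - 1 := by omega
  set m : ℕ := n - j with hmdef
  clear_value m
  have hnR : (3:ℝ) ≤ (n:ℝ) := by exact_mod_cast hn
  have hmR2 : (2:ℝ) ≤ (m:ℝ) := by exact_mod_cast hm2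
  have hmRn : (m:ℝ) ≤ (n:ℝ) - 1 := by
    have h' : (m:ℝ) + 1 ≤ (n:ℝ) := by exact_mod_cast (by omega : m + 1 ≤ n)
    linarith
  have hn0 : (0:ℝ) < n := by linarith
  have hn1 : (0:ℝ) < (n:ℝ) - 1 := by linarith
  have h4n5 : (0:ℝ) < 4*(n:ℝ) - 5 := by linarith
  have hm0 : (0:ℝ) < m := by linarith
  have e0 : (0:ℝ) < Real.exp 1 := Real.exp_pos 1
  have e1 : (1:ℝ) ≤ Real.exp 1 := Real.one_le_exp (by norm_num)
  have e4 : Real.exp 1 < 4 := lt_trans Real.exp_one_lt_d9 (by norm_num)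
  have hnsq : (0:ℝ) < (n:ℝ)^2 := by positivity
  have hden1 : (0:ℝ) < 3*(n:ℝ)*((n:ℝ)-1) := by nlinarith
  have hden2 : (0:ℝ) < 3*(n:ℝ)*((n:ℝ)-1)*(4*(n:ℝ)-5) := by nlinarith
  have hen2 : (0:ℝ) < Real.exp 1 * (n:ℝ)^2 := by positivity
  have h4n3 : (0:ℝ) < 4*(n:ℝ)^3 := by positivity
  have he3n3 : (0:ℝ) < Real.exp 1^3 * (n:ℝ)^3 := by positivity
  -- value of mu6
  have h_mu_val : mu6 n j = (m:ℝ)*((m:ℝ)-1)*(4*(n:ℝ)-5)/(3*(n:ℝ)*((n:ℝ)-1)) := by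
    simp only [mu6, ← hmdef, Nat.cast_choose_two]
    field_simp
    ring
  have h_mu_nonneg : 0 ≤ mu6 n j := by
    rw [h_mu_val]
    apply div_nonneg
    · exact mul_nonneg (mul_nonneg (by linarith) (by linarith)) (by linarith)
    · nlinarith
  -- value of d6
  have h_d_val : d6 n j = (2*(4*(n:ℝ)-5)^2 + 16*((m:ℝ)-2)*(2*(n:ℝ)-1)*(4*(n:ℝ)-5)
      + 36*((m:ℝ)-2)*(n:ℝ)*((n:ℝ)-1) + 24*((m:ℝ)-2)*(2*(n:ℝ)-1)*((n:ℝ)+1))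
      / (3*(n:ℝ)*((n:ℝ)-1)*(4*(n:ℝ)-5)) := by
    simp only [d6, ← hmdef, Nat.cast_choose_two]
    rw [div_add_div _ _ (by positivity) (by positivity)]
    field_simp
    ring
  have hm2nn : (0:ℝ) ≤ (m:ℝ) - 2 := by linarith
  have h_d_nonneg : 0 ≤ d6 n j := by
    rw [h_d_val]
    apply div_nonneg _ hden2.le
    nlinarith [sq_nonneg (4*(n:ℝ)-5),
      mul_nonneg (mul_nonneg hm2nn (by linarith : (0:ℝ) ≤ 2*(n:ℝ)-1)) h4n5.le,
      mul_nonneg (mul_nonneg hm2nn hn0.le) hn1.le,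
      mul_nonneg (mul_nonneg hm2nn (by linarith : (0:ℝ) ≤ 2*(n:ℝ)-1)) (by linarith : (0:ℝ) ≤ (n:ℝ)+1)]
  have h_D_nonneg : 0 ≤ D6 n j := by
    have h1 : 0 ≤ 2 * mu6 n j * d6 n j := mul_nonneg (by linarith) h_d_nonneg
    simp only [D6]
    exact le_min h_d_nonneg (le_min h1 zero_le_one)
  have h_D_le_one : D6 n j ≤ 1 := by
    simp only [D6]
    exact (min_le_right _ _).trans (min_le_right _ _)
  have h_exp_le_one : Real.exp (-(mu6 n j)) ≤ 1 :=
    Real.exp_le_one_iff.mpr (by linarith)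
  -- lower bound on exp(-mu)+D
  have hED : 1/(Real.exp 1 * (n:ℝ)^2) ≤ Real.exp (-(mu6 n j)) + D6 n j := by
    rcases eq_or_lt_of_le hm2 with hc2 | hc3
    · -- m = 2 : mu6 ≤ 1
      have hmval2 : (m:ℝ) = 2 := by exact_mod_cast hc2.symm
      have hmu1 : mu6 n j ≤ 1 := by
        rw [h_mu_val, hmval2, div_le_one hden1]
        nlinarith
      have : Real.exp (-1) ≤ Real.exp (-(mu6 n j)) := Real.exp_le_exp.mpr (by linarith)
      have hre : Real.exp (-1) = (Real.exp 1)⁻¹ := Real.exp_neg 1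
      have h1 : 1/(Real.exp 1 * (n:ℝ)^2) ≤ (Real.exp 1)⁻¹ := by
        rw [one_div, inv_le_inv₀ (by positivity) e0]
        nlinarith
      linarith [hre ▸ this]
    · -- m ≥ 3 : D6 ≥ 1/n²
      have hmR3 : (3:ℝ) ≤ (m:ℝ) := by exact_mod_cast hc3
      have hd3 : 3/(n:ℝ) ≤ d6 n j := by
        rw [h_d_val, div_le_div_iff₀ hn0 hden2]
        nlinarith [sq_nonneg ((n:ℝ)-1), mul_pos hn0 hn1,
          mul_nonneg (mul_nonneg (by linarith : (0:ℝ) ≤ (m:ℝ)-2) (by linarith : (0:ℝ) ≤ 2*(n:ℝ)-1)) h4n5.le,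
          mul_nonneg (mul_nonneg (by linarith : (0:ℝ) ≤ (m:ℝ)-2) (by linarith : (0:ℝ) ≤ 2*(n:ℝ)-1)) (by linarith : (0:ℝ) ≤ (n:ℝ)+1)]
      have hmu_low : 1/(n:ℝ) ≤ mu6 n j := by
        rw [h_mu_val, div_le_div_iff₀ hn0 hden1]
        have k1 : (6:ℝ) ≤ (m:ℝ)*((m:ℝ)-1) := by nlinarith
        have k2 : (0:ℝ) ≤ (4*(n:ℝ)-5) * (n:ℝ) := mul_nonneg h4n5.le hn0.le
        nlinarith [mul_le_mul_of_nonneg_right k1 k2,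
          mul_nonneg hn0.le (by linarith : (0:ℝ) ≤ 21*(n:ℝ)-27)]
      have hD_low : 1/(n:ℝ)^2 ≤ D6 n j := by
        simp only [D6]
        apply le_min
        · calc 1/(n:ℝ)^2 ≤ 3/(n:ℝ) := by
                rw [div_le_div_iff₀ hnsq hn0]
                nlinarith
            _ ≤ d6 n j := hd3
        apply le_min
        · calc 1/(n:ℝ)^2 ≤ 2 * (1/(n:ℝ)) * (3/(n:ℝ)) := by
                have h6 : 2 * (1/(n:ℝ)) * (3/(n:ℝ)) = 6/(n:ℝ)^2 := by
                  field_simp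
                  ring
                rw [h6, div_le_div_iff₀ hnsq hnsq]
                nlinarith
            _ ≤ 2 * mu6 n j * d6 n j := by
                apply mul_le_mul _ hd3 (by positivity) (by positivity)
                linarith
        · rw [div_le_one hnsq]
          nlinarith
      have h1 : 1/(Real.exp 1 * (n:ℝ)^2) ≤ 1/(n:ℝ)^2 := by
        rw [div_le_div_iff₀ hen2 hnsq]
        nlinarith
      have := Real.exp_nonneg (-(mu6 n j))
      linarith
  -- rewrite A6
  set main : ℝ := (Nat.choose n 2 : ℝ) ^ m / (m.factorial : ℝ) with hmain
  have hmain_nonneg : 0 ≤ main := by positivity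
  have hA6 : A6 n j = main * (Real.exp (-(mu6 n j)) + D6 n j) := by
    simp only [A6, ← hmdef, hmain]
    rw [mul_assoc]
    congr 1
    rw [mul_add, mul_one, ← mul_assoc, ← Real.exp_add, neg_add_cancel, Real.exp_zero, one_mul]
  set T : ℝ := ((n:ℝ)^2 * Real.exp 1 / (2*(m:ℝ)))^m with hT
  have hT0 : 0 ≤ T := by positivity
  have htarget : ((n : ℝ) ^ (1 - (j : ℝ) / n) * kappa ((j : ℝ) / n)) ^ n = T := by
    rw [aux_target n j hn hj1 hj2, hT, hmdef]
  have hup := aux_main_upper n m hn hm2 hmn1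
  have hlo := aux_main_lower n m hn hm2 hmn1
  rw [← hmain, ← hT] at hup hlo
  constructor
  · -- lower bound
    rw [htarget, hA6]
    have hstep : (T / (Real.exp 1^2 * (n:ℝ))) * (1/(Real.exp 1 * (n:ℝ)^2))
        ≤ main * (Real.exp (-(mu6 n j)) + D6 n j) := by
      apply mul_le_mul _ hED (by positivity) hmain_nonneg
      rw [div_le_iff₀ (by positivity)]
      calc T ≤ Real.exp 1 ^ 2 * (n:ℝ) * main := hlo
        _ = main * (Real.exp 1^2 * (n:ℝ)) := by ring
    refine le_trans ?_ hstep
    rw [show (T / (Real.exp 1^2 * (n:ℝ))) * (1/(Real.exp 1 * (n:ℝ)^2))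
        = T * (1 / (Real.exp 1^3 * (n:ℝ)^3)) from by ring,
      show Real.exp (-2) / (4*(n:ℝ)^3) * T = T * (Real.exp (-2) / (4*(n:ℝ)^3)) from by ring]
    apply mul_le_mul_of_nonneg_left _ hT0
    rw [div_le_div_iff₀ h4n3 he3n3]
    have hexp2 : Real.exp (-2) * Real.exp 1 ^ 2 = 1 := by
      rw [Real.exp_one_pow, ← Real.exp_add]
      norm_num
    have hkey : Real.exp (-2) * (Real.exp 1 ^ 3 * (n:ℝ)^3)
        = Real.exp 1 * (n:ℝ)^3 := by
      calc Real.exp (-2) * (Real.exp 1 ^ 3 * (n:ℝ)^3)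
          = (Real.exp (-2) * Real.exp 1 ^ 2) * (Real.exp 1 * (n:ℝ)^3) := by ring
        _ = Real.exp 1 * (n:ℝ)^3 := by rw [hexp2, one_mul]
    calc Real.exp (-2) * (Real.exp 1 ^ 3 * (n:ℝ)^3) = Real.exp 1 * (n:ℝ)^3 := hkey
      _ ≤ 1 * (4 * (n:ℝ)^3) := by nlinarith [pow_pos hn0 3]
  · -- upper bound
    rw [htarget, hA6]
    calc main * (Real.exp (-(mu6 n j)) + D6 n j) ≤ main * 2 := by
          apply mul_le_mul_of_nonneg_left (by linarith) hmain_nonneg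
      _ = 2 * main := by ring
      _ ≤ 2 * T := by linarith
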